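/- Let X be a finite set with |X| = n and let F be a family of subsets of X. Then there exists an assignment of positive integer weights w : X → {1, 2, ..., γ²|F|²}, where γ is the maximum cardinality of a set in F, such that for all distinct S1, S2 ∈ F, the total weight of S1 differs from the total weight of S2. -/

import Mathlib

open Finset

private lemma pair_bound_aux {α : Type*} [Fintype α] [DecidableEq α] (M : ℕ) (hM : 1 ≤ M)
    (S₁ S₂ : Finset α) (x : α) (hx1 : x ∈ S₁) (hx2 : x ∉ S₂) :
    (((Fintype.piFinset fun _ : α => Finset.Icc 1 M)).filter
        fun w => ∑ y ∈ S₁, w y = ∑ y ∈ S₂, w y).card ≤ M ^ (Fintype.card α - 1) := by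
  have hcard : (Fintype.piFinset fun y : α =>
      if y = x then ({1} : Finset ℕ) else Finset.Icc 1 M).card = M ^ (Fintype.card α - 1) := by
    rw [Fintype.card_piFinset]
    have : ∀ y : α, (if y = x then ({1} : Finset ℕ) else Finset.Icc 1 M).card =
        if y = x then 1 else M := by
      intro y; split <;> simp [Nat.card_Icc]
    simp only [this]
    rw [← Finset.prod_erase_mul Finset.univ _ (Finset.mem_univ x)]
    rw [if_pos rfl, mul_one, Finset.prod_ite_of_false]
    · rw [Finset.prod_const, Finset.card_erase_of_mem (Finset.mem_univ x), Finset.card_univ]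
    · intro y hy; exact Finset.ne_of_mem_erase hy
  rw [← hcard]
  apply Finset.card_le_card_of_injOn (fun w => Function.update w x 1)
  · intro w hw
    rw [Finset.mem_coe, Finset.mem_filter] at hw
    rw [Finset.mem_coe, Fintype.mem_piFinset]
    intro y
    by_cases hy : y = x
    · subst hy; simp
    · dsimp only; rw [Function.update_of_ne hy, if_neg hy]
      exact Fintype.mem_piFinset.mp hw.1 y
  · intro w hw w' hw' heq
    rw [Finset.coe_filter, Set.mem_setOf_eq] at hw hw'
    have hoff : ∀ y, y ≠ x → w y = w' y := by
      intro y hy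
      have := congrFun heq y
      simpa [Function.update_of_ne hy] using this
    have hS2 : ∑ y ∈ S₂, w y = ∑ y ∈ S₂, w' y :=
      Finset.sum_congr rfl fun y hy => hoff y (fun h => hx2 (h ▸ hy))
    have hE : ∑ y ∈ S₁.erase x, w y = ∑ y ∈ S₁.erase x, w' y :=
      Finset.sum_congr rfl fun y hy => hoff y (Finset.ne_of_mem_erase hy)
    have h1 : w x + ∑ y ∈ S₁.erase x, w y = w' x + ∑ y ∈ S₁.erase x, w' y := by
      rw [Finset.add_sum_erase _ _ hx1, Finset.add_sum_erase _ _ hx1, hw.2, hw'.2, hS2]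
    have hx : w x = w' x := by
      rw [hE] at h1; exact Nat.add_right_cancel h1
    funext y
    by_cases hy : y = x
    · subst hy; exact hx
    · exact hoff y hy

private lemma pair_bound {α : Type*} [Fintype α] [DecidableEq α] (M : ℕ) (hM : 1 ≤ M)
    (S₁ S₂ : Finset α) (h : S₁ ≠ S₂) :
    (((Fintype.piFinset fun _ : α => Finset.Icc 1 M)).filter
        fun w => ∑ y ∈ S₁, w y = ∑ y ∈ S₂, w y).card ≤ M ^ (Fintype.card α - 1) := by
  by_cases hsub : S₁ ⊆ S₂
  · obtain ⟨x, hx2, hx1⟩ := Finset.exists_of_ssubset (Finset.ssubset_iff_subset_ne.mpr ⟨hsub, h⟩)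
    have hb := pair_bound_aux M hM S₂ S₁ x hx2 hx1
    have heq : (((Fintype.piFinset fun _ : α => Finset.Icc 1 M)).filter
        fun w => ∑ y ∈ S₁, w y = ∑ y ∈ S₂, w y) =
        (((Fintype.piFinset fun _ : α => Finset.Icc 1 M)).filter
        fun w => ∑ y ∈ S₂, w y = ∑ y ∈ S₁, w y) := by
      apply Finset.filter_congr; intro w _; exact eq_comm
    rwa [heq]
  · obtain ⟨x, hx1, hx2⟩ := Finset.not_subset.mp hsub
    exact pair_bound_aux M hM S₁ S₂ x hx1 hx2

/-- Deterministic Separation Lemma: there is a weight assignment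
`w : X → {1,...,γ²|F|²}` (γ the largest cardinality of a set in `F`)
giving all sets in `F` pairwise distinct total weights. -/
theorem deterministic_separation_lemma {α : Type*} [Fintype α] [DecidableEq α]
    (F : Finset (Finset α)) (hγ : 1 ≤ F.sup Finset.card) :
    ∃ w : α → ℕ,
      (∀ x : α, w x ∈ Finset.Icc 1 ((F.sup Finset.card) ^ 2 * F.card ^ 2)) ∧
      ∀ S₁ ∈ F, ∀ S₂ ∈ F, S₁ ≠ S₂ → ∑ x ∈ S₁, w x ≠ ∑ x ∈ S₂, w x := by
  -- F is nonempty
  have hFne : F.Nonempty := by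
    by_contra h
    rw [Finset.not_nonempty_iff_eq_empty] at h
    subst h; simp at hγ
  -- α is nonempty
  have hn1 : 1 ≤ Fintype.card α := by
    obtain ⟨S, hS, hScard⟩ := Finset.exists_mem_eq_sup F hFne Finset.card
    have h1 : 1 ≤ S.card := hScard ▸ hγ
    obtain ⟨x, _⟩ := Finset.card_pos.mp h1
    exact Fintype.card_pos_iff.mpr ⟨x⟩
  set γ := F.sup Finset.card with hγdef
  set m := F.card with hmdef
  set M := γ ^ 2 * m ^ 2 with hMdef
  have hm1 : 1 ≤ m := Finset.card_pos.mpr hFne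
  have hM1 : 1 ≤ M := by
    have h1 : 0 < γ ^ 2 := pow_pos hγ 2
    have h2 : 0 < m ^ 2 := pow_pos hm1 2
    exact Nat.mul_pos h1 h2
  set W := Fintype.piFinset fun _ : α => Finset.Icc 1 M with hWdef
  have hWcard : W.card = M ^ Fintype.card α := by
    rw [hWdef, Fintype.card_piFinset]
    simp [Nat.card_Icc]
  set Bad := W.filter (fun w => ∃ S₁ ∈ F, ∃ S₂ ∈ F, S₁ ≠ S₂ ∧
      ∑ x ∈ S₁, w x = ∑ x ∈ S₂, w x) with hBadDef
  have hsub : Bad ⊆ F.offDiag.biUnion (fun p =>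
      W.filter fun w => ∑ x ∈ p.1, w x = ∑ x ∈ p.2, w x) := by
    intro w hw
    rw [hBadDef, Finset.mem_filter] at hw
    obtain ⟨hwW, S₁, hS₁, S₂, hS₂, hne, hsum⟩ := hw
    rw [Finset.mem_biUnion]
    exact ⟨(S₁, S₂), Finset.mem_offDiag.mpr ⟨hS₁, hS₂, hne⟩,
      Finset.mem_filter.mpr ⟨hwW, hsum⟩⟩
  have hBadCard : Bad.card < W.card := by
    rw [hWcard]
    calc Bad.card ≤ ∑ p ∈ F.offDiag,
        (W.filter fun w => ∑ x ∈ p.1, w x = ∑ x ∈ p.2, w x).card :=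
          (Finset.card_le_card hsub).trans (Finset.card_biUnion_le)
      _ ≤ ∑ p ∈ F.offDiag, M ^ (Fintype.card α - 1) := by
          apply Finset.sum_le_sum
          intro p hp
          exact pair_bound M hM1 p.1 p.2 (Finset.mem_offDiag.mp hp).2.2
      _ = (m * m - m) * M ^ (Fintype.card α - 1) := by
          rw [Finset.sum_const, smul_eq_mul, Finset.offDiag_card]
      _ < M * M ^ (Fintype.card α - 1) := by
          have hmm : m * m ≤ M := by
            have h1 : 1 ≤ γ ^ 2 := Nat.one_le_pow _ _ hγ
            calc m * m = m ^ 2 := (sq m).symm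
              _ = 1 * m ^ 2 := (one_mul _).symm
              _ ≤ γ ^ 2 * m ^ 2 := Nat.mul_le_mul_right _ h1
          have hlt : m * m - m < M := by omega
          exact mul_lt_mul_of_pos_right hlt (Nat.one_le_pow _ _ hM1)
      _ = M ^ Fintype.card α := by
          rw [← pow_succ']
          congr 1
          omega
  have hBsub : Bad ⊆ W := Finset.filter_subset _ _
  have hne : (W \ Bad).Nonempty := by
    rw [← Finset.card_pos, Finset.card_sdiff_of_subset hBsub]
    omega
  obtain ⟨w, hw⟩ := hne
  rw [Finset.mem_sdiff] at hw
  obtain ⟨hwW, hwBad⟩ := hw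
  refine ⟨w, fun x => Fintype.mem_piFinset.mp hwW x, ?_⟩
  intro S₁ hS₁ S₂ hS₂ hne hsum
  exact hwBad (Finset.mem_filter.mpr ⟨hwW, S₁, hS₁, S₂, hS₂, hne, hsum⟩)
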